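/- Let 0<\beta<\theta<1 with \log\theta/\log\beta irrational, and let (\theta_i) be a sequence of positive reals tending to 0. Then for every sufficiently small \eta>0 there exists i_0 such that for all i \geq i_0 there exist positive integers m,n with \eta/(2\theta_i) \leq 1/\theta_i - 1/(\theta^n \beta^m) \leq 4\eta/\theta_i. -/

import Mathlib

open Filter

lemma exists_small_pos_comb (a b : ℝ) (hb : b ≠ 0)
    (hirr : Irrational (a / b)) :
    ∀ ε > (0:ℝ), ∃ p q : ℤ, 0 < (p:ℝ) * a + q * b ∧ (p:ℝ) * a + q * b < ε := by
  intro ε hε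
  have hdense : Dense ((AddSubgroup.closure {a, b} : AddSubgroup ℝ) : Set ℝ) := by
    rcases AddSubgroup.dense_or_cyclic (AddSubgroup.closure {a, b}) with h | ⟨g, hg⟩
    · exact h
    · exfalso
      have haS : a ∈ AddSubgroup.closure ({a, b} : Set ℝ) :=
        AddSubgroup.subset_closure (by simp)
      have hbS : b ∈ AddSubgroup.closure ({a, b} : Set ℝ) :=
        AddSubgroup.subset_closure (by simp)
      rw [hg, AddSubgroup.mem_closure_singleton] at haS hbS
      obtain ⟨j, hj⟩ := haS
      obtain ⟨l, hl⟩ := hbS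
      rw [zsmul_eq_mul] at hj hl
      have hg0 : g ≠ 0 := by
        rintro rfl; apply hb; rw [← hl]; ring
      have hl0 : (l : ℝ) ≠ 0 := by
        rintro h; apply hb; rw [← hl, h]; ring
      have : a / b = ((j : ℚ) / (l : ℚ) : ℚ) := by
        push_cast
        rw [← hj, ← hl, mul_div_mul_right _ _ hg0]
      exact hirr ⟨_, this.symm⟩
  obtain ⟨x, hxS, hx⟩ := hdense.exists_mem_open isOpen_Ioo
    (⟨ε / 2, by constructor <;> linarith⟩ : (Set.Ioo (0:ℝ) ε).Nonempty)
  rw [SetLike.mem_coe, AddSubgroup.mem_closure_pair] at hxS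
  obtain ⟨p, q, hpq⟩ := hxS
  refine ⟨p, q, ?_, ?_⟩ <;>
    · rw [show (p:ℝ) * a + q * b = p • a + q • b by simp [zsmul_eq_mul], hpq]
      first | exact hx.1 | exact hx.2

set_option maxHeartbeats 1000000 in
theorem approximation_by_powers
    (β θ : ℝ) (hβ : 0 < β) (hβθ : β < θ) (hθ : θ < 1)
    (hirr : Irrational (Real.log θ / Real.log β))
    (θi : ℕ → ℝ) (hpos : ∀ i, 0 < θi i)
    (hlim : Tendsto θi atTop (nhds 0)) :
    ∃ η₀ > (0:ℝ), ∀ η : ℝ, 0 < η → η ≤ η₀ →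
      ∃ i₀ : ℕ, ∀ i ≥ i₀, ∃ m n : ℕ, 0 < m ∧ 0 < n ∧
        η / (2 * θi i) ≤ 1 / θi i - 1 / (θ ^ n * β ^ m) ∧
        1 / θi i - 1 / (θ ^ n * β ^ m) ≤ 4 * η / θi i := by
  have hθ0 : 0 < θ := lt_trans hβ hβθ
  set a := Real.log θ with hadef
  set b := Real.log β with hbdef
  have ha : a < 0 := Real.log_neg hθ0 hθ
  have hb : b < 0 := Real.log_neg hβ (hβθ.trans hθ)
  refine ⟨1/8, by norm_num, ?_⟩
  intro η hη hη8
  have h4η : (0:ℝ) < 1 - 4 * η := by linarith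
  have hη2 : (0:ℝ) < 1 - η / 2 := by linarith
  have hL : 0 < Real.log (1 - η / 2) - Real.log (1 - 4 * η) := by
    have := Real.log_lt_log h4η (by linarith : 1 - 4 * η < 1 - η / 2)
    linarith
  set L := Real.log (1 - η / 2) - Real.log (1 - 4 * η) with hLdef
  obtain ⟨p, q, hδ0, hδL⟩ := exists_small_pos_comb a b (ne_of_lt hb) hirr L hL
  set δ := (p:ℝ) * a + q * b with hδdef
  set K : ℕ := ⌈(-a) / δ⌉₊ with hKdef
  set M : ℤ := 1 + K * q.natAbs with hMdef
  set B : ℤ := 1 + K * p.natAbs with hBdef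
  set T : ℝ := (B:ℝ) * a + M * b with hTdef
  have hε₀ : (0:ℝ) < Real.exp (T + Real.log (1 - η / 2)) := Real.exp_pos _
  obtain ⟨i₀, hi₀⟩ := eventually_atTop.mp (hlim.eventually_lt_const hε₀)
  refine ⟨i₀, ?_⟩
  intro i hi
  set t := θi i with htdef
  have ht : 0 < t := hpos i
  set c : ℝ := Real.log t - Real.log (1 - η / 2) with hcdef
  have hcT : c < T := by
    have h1 : Real.log t < T + Real.log (1 - η / 2) :=
      (Real.log_lt_iff_lt_exp ht).mpr (hi₀ i hi)
    simp only [hcdef]; linarith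
  -- choose n
  set n : ℤ := ⌊(c - M * b) / a⌋ + 1 with hndef
  have hn1 : (c - M * b) / a < (n:ℝ) := by
    push_cast [hndef]; exact Int.lt_floor_add_one _
  have hn2 : ((n:ℝ) - 1) ≤ (c - M * b) / a := by
    push_cast [hndef]; simp [Int.floor_le]
  set s : ℝ := (n:ℝ) * a + M * b with hsdef
  have hs1 : s < c := by
    have := (div_lt_iff_of_neg ha).mp hn1
    simp only [hsdef]; linarith
  have hs2 : c + a ≤ s := by
    have := (le_div_iff_of_neg ha).mp hn2
    simp only [hsdef]; nlinarith
  have hnB : (B:ℝ) < (n:ℝ) := by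
    have hBlt : (B:ℝ) < (c - M * b) / a := by
      rw [lt_div_iff_of_neg ha]
      simp only [hTdef] at hcT; linarith
    linarith
  have hnBi : B < n := by exact_mod_cast hnB
  -- choose k
  set k : ℕ := ⌈(c - s) / δ⌉₊ with hkdef
  have hcs0 : 0 ≤ (c - s) / δ := div_nonneg (by linarith) (le_of_lt hδ0)
  have hr : c - s = ((c - s) / δ) * δ := (div_mul_cancel₀ _ (ne_of_gt hδ0)).symm
  have hk1 : c ≤ s + k * δ := by
    have h := Nat.le_ceil ((c - s) / δ)
    rw [← hkdef] at h
    have h' := mul_le_mul_of_nonneg_right h hδ0.le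
    rw [div_mul_cancel₀ _ (ne_of_gt hδ0)] at h'
    linarith
  have hk2 : s + k * δ < c + δ := by
    have h := Nat.ceil_lt_add_one hcs0
    rw [← hkdef] at h
    have h' := mul_lt_mul_of_pos_right h hδ0
    rw [add_mul, one_mul, div_mul_cancel₀ _ (ne_of_gt hδ0)] at h'
    linarith
  have hkK : k ≤ K := by
    rw [hkdef, hKdef]
    exact Nat.ceil_le_ceil ((div_le_div_iff_of_pos_right hδ0).mpr (by linarith))
  -- final exponents
  set n' : ℤ := n + k * p with hn'def
  set m' : ℤ := M + k * q with hm'def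
  have hkp : -((K:ℤ) * p.natAbs) ≤ (k:ℤ) * p := by
    have h1 : -(p.natAbs : ℤ) ≤ p := by
      rw [← Int.abs_eq_natAbs]; exact neg_abs_le p
    have h2 : (k:ℤ) ≤ K := by exact_mod_cast hkK
    nlinarith [Int.natCast_nonneg p.natAbs, Int.natCast_nonneg k]
  have hkq : -((K:ℤ) * q.natAbs) ≤ (k:ℤ) * q := by
    have h1 : -(q.natAbs : ℤ) ≤ q := by
      rw [← Int.abs_eq_natAbs]; exact neg_abs_le q
    have h2 : (k:ℤ) ≤ K := by exact_mod_cast hkK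
    nlinarith [Int.natCast_nonneg q.natAbs, Int.natCast_nonneg k]
  have hn'1 : 1 ≤ n' := by
    have hB : B = 1 + (K:ℤ) * p.natAbs := hBdef
    linarith [hnBi, hkp, hn'def]
  have hm'1 : 1 ≤ m' := by
    have hM : M = 1 + (K:ℤ) * q.natAbs := hMdef
    linarith [hkq, hm'def]
  -- the value
  have hval : (n':ℝ) * a + (m':ℝ) * b = s + k * δ := by
    simp only [hn'def, hm'def, hsdef, hδdef]
    push_cast
    ring
  set x : ℝ := (n':ℝ) * a + (m':ℝ) * b with hxdef
  have hx1 : c ≤ x := by rw [hval]; exact hk1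
  have hx2 : x ≤ c + L := by rw [hval]; linarith
  -- convert to powers
  have hcastn : ((n'.toNat : ℕ) : ℝ) = (n' : ℝ) := by
    exact_mod_cast Int.toNat_of_nonneg (by omega)
  have hcastm : ((m'.toNat : ℕ) : ℝ) = (m' : ℝ) := by
    exact_mod_cast Int.toNat_of_nonneg (by omega)
  have hθa : θ = Real.exp a := by rw [hadef, Real.exp_log hθ0]
  have hβb : β = Real.exp b := by rw [hbdef, Real.exp_log hβ]
  have hP : θ ^ n'.toNat * β ^ m'.toNat = Real.exp x := by
    rw [hθa, hβb, ← Real.exp_nat_mul, ← Real.exp_nat_mul, ← Real.exp_add]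
    congr 1
    rw [hxdef, hcastn, hcastm]
  have hexpc : Real.exp c = t / (1 - η / 2) := by
    rw [hcdef, Real.exp_sub, Real.exp_log ht, Real.exp_log hη2]
  have hexpcL : Real.exp (c + L) = t / (1 - 4 * η) := by
    rw [show c + L = Real.log t - Real.log (1 - 4 * η) by rw [hcdef, hLdef]; ring]
    rw [Real.exp_sub, Real.exp_log ht, Real.exp_log h4η]
  have hP1 : t / (1 - η / 2) ≤ θ ^ n'.toNat * β ^ m'.toNat := by
    rw [hP, ← hexpc]; exact Real.exp_le_exp.mpr hx1
  have hP2 : θ ^ n'.toNat * β ^ m'.toNat ≤ t / (1 - 4 * η) := by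
    rw [hP, ← hexpcL]; exact Real.exp_le_exp.mpr hx2
  have hP0 : 0 < θ ^ n'.toNat * β ^ m'.toNat := by positivity
  have htd : 0 < t / (1 - η / 2) := by positivity
  refine ⟨m'.toNat, n'.toNat, by omega, by omega, ?_, ?_⟩
  · have h1 : 1 / (θ ^ n'.toNat * β ^ m'.toNat) ≤ (1 - η / 2) / t := by
      have := one_div_le_one_div_of_le htd hP1
      rwa [one_div_div] at this
    have h2 : 1 / t - (1 - η / 2) / t = η / (2 * t) := by
      field_simp
      ring
    linarith
  · have h1 : (1 - 4 * η) / t ≤ 1 / (θ ^ n'.toNat * β ^ m'.toNat) := by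
      have := one_div_le_one_div_of_le hP0 hP2
      rwa [one_div_div] at this
    have h2 : 1 / t - (1 - 4 * η) / t = 4 * η / t := by
      field_simp
      ring
    linarith
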